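/- Let L be a bounded chain and S a nonempty subset of L. If f : L^n → L is comonotonic minitive, then f is horizontally S-minitive: f(x) = f(x ∨ c) ∧ f([x]^c) for every x ∈ L^n and c ∈ S. Moreover, if f is additionally S-idempotent, then f is S-min homogeneous: f(x ∧ c) = f(x) ∧ c for all x ∈ L^n, c ∈ S. -/

import Mathlib

/-- Two vectors are comonotonic if they lie in a common standard simplex. -/
def Comonotone {L : Type*} [LinearOrder L] {n : ℕ} (x y : Fin n → L) : Prop :=
  ∃ σ : Equiv.Perm (Fin n), Monotone (x ∘ σ) ∧ Monotone (y ∘ σ)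

/-- a comonotonic minitive function is horizontally S-minitive, and
if moreover it is S-idempotent then it is S-min homogeneous. -/
theorem stmt12 {L : Type*} [LinearOrder L] [BoundedOrder L] {n : ℕ}
    (S : Set L) (hS : S.Nonempty) (f : (Fin n → L) → L)
    (hcm : ∀ x y, Comonotone x y → f (x ⊓ y) = f x ⊓ f y) :
    (∀ (x : Fin n → L), ∀ c ∈ S,
        f x = f (fun i => x i ⊔ c) ⊓ f (fun i => if c ≤ x i then ⊤ else x i)) ∧
    ((∀ c ∈ S, f (fun _ => c) = c) →
      ∀ (x : Fin n → L), ∀ c ∈ S, f (fun i => x i ⊓ c) = f x ⊓ c) := by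
  constructor
  · intro x c _
    have hco : Comonotone (fun i => x i ⊔ c) (fun i => if c ≤ x i then ⊤ else x i) := by
      refine ⟨Tuple.sort x, ?_, ?_⟩
      · intro i j hij
        exact sup_le_sup_right (Tuple.monotone_sort x hij) c
      · intro i j hij
        have hx : x (Tuple.sort x i) ≤ x (Tuple.sort x j) := Tuple.monotone_sort x hij
        simp only [Function.comp_apply]
        split_ifs with h1 h2 h2
        · exact le_refl _
        · exact absurd (h1.trans hx) h2
        · exact le_top
        · exact hx
    have key : (fun i => x i ⊔ c) ⊓ (fun i => if c ≤ x i then ⊤ else x i) = x := by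
      funext i
      simp only [Pi.inf_apply]
      split_ifs with h
      · simp [sup_eq_left.mpr h]
      · exact inf_eq_right.mpr le_sup_left
    have := hcm _ _ hco
    rw [key] at this
    exact this
  · intro hid x c hc
    have hco : Comonotone x (fun _ => c) :=
      ⟨Tuple.sort x, Tuple.monotone_sort x, monotone_const⟩
    have := hcm _ _ hco
    rw [hid c hc] at this
    convert this using 2
    rfl
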